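/- If a set E ⊆ ℝ^d satisfies the k-dimensional (ℓ,γ)-geometric control condition (every k-dimensional cube of side length at least ℓ meets E in k-dimensional Hausdorff measure at least γℓ^k), then for every j with k ≤ j ≤ d, E satisfies the j-dimensional (ℓ,γ')-GCC for some γ' > 0. -/

import Mathlib

open MeasureTheory
open scoped MeasureTheory NNReal ENNReal

/-- `E ⊆ ℝ^d` satisfies the `k`-dimensional `(ℓ,γ)`-geometric control condition:
every `k`-dimensional cube of side length at least `ℓ` (the image under an affine
isometry of a standard cube in `ℝ^k`) meets `E` in `k`-dimensional Hausdorff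
measure at least `γ ℓ^k`. -/
def SatisfiesGCC (d k : ℕ) (ℓ γ : ℝ) (E : Set (EuclideanSpace ℝ (Fin d))) : Prop :=
  ∀ (φ : EuclideanSpace ℝ (Fin k) →ᵃⁱ[ℝ] EuclideanSpace ℝ (Fin d)) (a : ℝ), ℓ ≤ a →
    ENNReal.ofReal (γ * ℓ ^ k) ≤
      μH[(k : ℝ)] ((φ '' (WithLp.ofLp ⁻¹' Set.univ.pi fun _ : Fin k => Set.Icc (0 : ℝ) a)) ∩ E)

/-- The GCC passes to preimages under affine isometries. -/
lemma gcc_preimage {d m k : ℕ} {ℓ γ : ℝ} {E : Set (EuclideanSpace ℝ (Fin d))}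
    (hE : SatisfiesGCC d k ℓ γ E) (ψ : EuclideanSpace ℝ (Fin m) →ᵃⁱ[ℝ] EuclideanSpace ℝ (Fin d)) :
    SatisfiesGCC m k ℓ γ (ψ ⁻¹' E) := by
  intro χ a ha
  have h1 := ψ.isometry.hausdorffMeasure_image (f := ⇑ψ) (d := (k:ℝ))
    (Or.inl (by positivity)) ((χ '' (WithLp.ofLp ⁻¹' Set.univ.pi fun _ : Fin k => Set.Icc (0:ℝ) a)) ∩ ψ ⁻¹' E)
  rw [← h1, Set.image_inter_preimage, ← Set.image_comp]
  exact hE (ψ.comp χ) a ha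

/-- Extending a vector by a zero last coordinate, as a linear isometry. -/
noncomputable def snocLI (j : ℕ) : EuclideanSpace ℝ (Fin j) →ₗᵢ[ℝ] EuclideanSpace ℝ (Fin (j+1)) where
  toLinearMap :=
    { toFun := fun x => (show EuclideanSpace ℝ (Fin (j+1)) from
        WithLp.toLp 2 (Fin.snoc (WithLp.ofLp x) 0 : Fin (j+1) → ℝ))
      map_add' := by
        intro x y
        ext i
        induction i using Fin.lastCases <;>
          simp [Fin.snoc_castSucc, Fin.snoc_last, PiLp.add_apply]
      map_smul' := by
        intro c x
        ext i
        induction i using Fin.lastCases <;>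
          simp [Fin.snoc_castSucc, Fin.snoc_last, PiLp.smul_apply, smul_eq_mul] }
  norm_map' := by
    intro x
    rw [EuclideanSpace.norm_eq, EuclideanSpace.norm_eq]
    congr 1
    rw [Fin.sum_univ_castSucc]
    simp [Fin.snoc_castSucc, Fin.snoc_last]

/-- Extending a vector by a last coordinate `t`, as an affine isometry. -/
noncomputable def snocAI (j : ℕ) (t : ℝ) :
    EuclideanSpace ℝ (Fin j) →ᵃⁱ[ℝ] EuclideanSpace ℝ (Fin (j+1)) :=
  ((AffineIsometryEquiv.constVAdd ℝ (EuclideanSpace ℝ (Fin (j+1)))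
      (show EuclideanSpace ℝ (Fin (j+1)) from WithLp.toLp 2 (Fin.snoc 0 t : Fin (j+1) → ℝ))).toAffineIsometry).comp
    (snocLI j).toAffineIsometry

lemma snocAI_apply (j : ℕ) (t : ℝ) (x : EuclideanSpace ℝ (Fin j)) :
    snocAI j t x = (show EuclideanSpace ℝ (Fin (j+1)) from
      WithLp.toLp 2 (Fin.snoc (WithLp.ofLp x) t : Fin (j+1) → ℝ)) := by
  have h : snocAI j t x = (show EuclideanSpace ℝ (Fin (j+1)) from
      WithLp.toLp 2 (Fin.snoc 0 t : Fin (j+1) → ℝ)) + snocLI j x := rfl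
  rw [h]
  ext i
  show (Fin.snoc (0:Fin j → ℝ) t : Fin (j+1) → ℝ) i + (Fin.snoc (WithLp.ofLp x) 0 : Fin (j+1) → ℝ) i
      = (Fin.snoc (WithLp.ofLp x) t : Fin (j+1) → ℝ) i
  induction i using Fin.lastCases <;> simp [Fin.snoc_castSucc, Fin.snoc_last]

/-- Lebesgue measure (of the coordinate image) is at most the Euclidean Hausdorff measure. -/
lemma vol_le_hausdorff (n : ℕ) (s : Set (EuclideanSpace ℝ (Fin n))) :
    volume (⇑(WithLp.equiv 2 (Fin n → ℝ)) '' s) ≤ μH[(n:ℝ)] s := by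
  have h := (PiLp.lipschitzWith_ofLp 2 (fun _ : Fin n => ℝ)).hausdorffMeasure_image_le
    (d := (n:ℝ)) (by positivity) s
  have hpi : (μH[(n:ℝ)] : Measure (Fin n → ℝ)) = volume := by
    rw [show ((n:ℝ)) = ((Fintype.card (Fin n) : ℕ) : ℝ) by simp, hausdorffMeasure_pi_real]
  rw [hpi] at h
  simpa using h

/-- The Euclidean Hausdorff measure is at most a constant times Lebesgue measure. -/
lemma hausdorff_le_vol (n : ℕ) (s : Set (EuclideanSpace ℝ (Fin n))) :
    μH[(n:ℝ)] s ≤ (((n : ℝ≥0) ^ ((1:ℝ)/2) : ℝ≥0) : ℝ≥0∞) ^ (n:ℝ)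
      * volume (⇑(WithLp.equiv 2 (Fin n → ℝ)) '' s) := by
  have h := (PiLp.antilipschitzWith_ofLp 2 (fun _ : Fin n => ℝ)).le_hausdorffMeasure_image
    (d := (n:ℝ)) (by positivity) s
  have hpi : (μH[(n:ℝ)] : Measure (Fin n → ℝ)) = volume := by
    rw [show ((n:ℝ)) = ((Fintype.card (Fin n) : ℕ) : ℝ) by simp, hausdorffMeasure_pi_real]
  rw [hpi] at h
  have hc : ((1 : ℝ≥0∞) / 2).toReal = (1:ℝ)/2 := by simp
  rw [hc, Fintype.card_fin] at h
  exact h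

lemma ennreal_div_trick {b : ℝ} {C V : ℝ≥0∞} (hC0 : C ≠ 0) (hCt : C ≠ ⊤)
    (h : ENNReal.ofReal b ≤ C * V) : ENNReal.ofReal (b / C.toReal) ≤ V := by
  rw [ENNReal.ofReal_div_of_pos (ENNReal.toReal_pos hC0 hCt), ENNReal.ofReal_toReal hCt,
    ENNReal.div_le_iff hC0 hCt]
  rwa [mul_comm] at h

/-- Main quantitative lemma: if `F ⊆ ℝ^j` satisfies the `k`-dimensional GCC, then every
standard cube of side `a ≥ ℓ` meets `F` in Lebesgue measure at least `γj ℓ^j`. -/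
lemma gcc_cube (k : ℕ) (hk : 1 ≤ k) (ℓ γ : ℝ) (hℓ : 0 < ℓ) (hγ : 0 < γ) :
    ∀ j, k ≤ j → ∃ γj > (0:ℝ), ∀ F : Set (EuclideanSpace ℝ (Fin j)),
      SatisfiesGCC j k ℓ γ F → ∀ a, ℓ ≤ a →
      ENNReal.ofReal (γj * ℓ ^ j) ≤
        volume (⇑(WithLp.equiv 2 (Fin j → ℝ)) ''
          ((WithLp.ofLp ⁻¹' Set.univ.pi fun _ : Fin j => Set.Icc (0:ℝ) a) ∩ F)) := by
  intro j hkj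
  induction j, hkj using Nat.le_induction with
  | base =>
    set C : ℝ≥0∞ := (((k : ℝ≥0) ^ ((1:ℝ)/2) : ℝ≥0) : ℝ≥0∞) ^ (k:ℝ) with hC
    have hkpos : (0:ℝ≥0) < (k:ℝ≥0) := by exact_mod_cast Nat.lt_of_lt_of_le Nat.zero_lt_one hk
    have hKpos : (0:ℝ≥0) < (k:ℝ≥0) ^ ((1:ℝ)/2) := NNReal.rpow_pos hkpos
    have hC0 : C ≠ 0 := (ENNReal.rpow_pos (ENNReal.coe_pos.mpr hKpos) ENNReal.coe_ne_top).ne'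
    have hCt : C ≠ ⊤ := ENNReal.rpow_ne_top_of_nonneg (by positivity) ENNReal.coe_ne_top
    refine ⟨γ * ℓ ^ k / C.toReal / ℓ ^ k, by
      have := ENNReal.toReal_pos hC0 hCt
      positivity, ?_⟩
    intro F hF a ha
    have h1 : ENNReal.ofReal (γ * ℓ ^ k) ≤
        (μH[(k:ℝ)] : Measure (EuclideanSpace ℝ (Fin k)))
          ((WithLp.ofLp ⁻¹' Set.univ.pi fun _ : Fin k => Set.Icc (0:ℝ) a) ∩ F) := by
      have h0 := hF (AffineIsometry.id (𝕜 := ℝ) (P := EuclideanSpace ℝ (Fin k))) a ha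
      rwa [AffineIsometry.coe_id, Set.image_id] at h0
    have h2 := h1.trans (hausdorff_le_vol k _)
    have h3 := ennreal_div_trick hC0 hCt h2
    refine le_trans (le_of_eq ?_) h3
    congr 1
    have hne : (ℓ : ℝ) ^ k ≠ 0 := by positivity
    exact div_mul_cancel₀ _ hne
  | succ j hj ih =>
    obtain ⟨γj, hγj, ihB⟩ := ih
    refine ⟨γj, hγj, ?_⟩
    intro F hF a ha
    set A : Set (Fin (j+1) → ℝ) := ⇑(WithLp.equiv 2 (Fin (j+1) → ℝ)) ''
      ((WithLp.ofLp ⁻¹' Set.univ.pi fun _ : Fin (j+1) => Set.Icc (0:ℝ) a) ∩ F) with hA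
    set M : Set (Fin (j+1) → ℝ) := toMeasurable volume A with hM
    have hAM : A ⊆ M := subset_toMeasurable _ _
    have hMmeas : MeasurableSet M := measurableSet_toMeasurable _ _
    have hMA : volume M = volume A := measure_toMeasurable A
    set me := MeasurableEquiv.piFinSuccAbove (fun _ : Fin (j+1) => ℝ) (Fin.last j) with hme
    have mp : MeasurePreserving ⇑me volume volume :=
      volume_preserving_piFinSuccAbove (fun _ : Fin (j+1) => ℝ) (Fin.last j)
    set S : Set (ℝ × (Fin j → ℝ)) := ⇑me.symm ⁻¹' M with hSdef
    have hSmeas : MeasurableSet S := me.symm.measurable hMmeas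
    have hvolS : volume S = volume M := (MeasurePreserving.symm me mp).measure_preimage hMmeas.nullMeasurableSet
    have hslice : ∀ t ∈ Set.Icc (0:ℝ) a,
        ENNReal.ofReal (γj * ℓ ^ j) ≤ volume (Prod.mk t ⁻¹' S) := by
      intro t ht
      have hFt := gcc_preimage hF (snocAI j t)
      have hIH := ihB _ hFt a ha
      refine le_trans hIH (measure_mono ?_)
      rintro z ⟨x, ⟨hxC, hxF⟩, rfl⟩
      show me.symm (t, ⇑(WithLp.equiv 2 (Fin j → ℝ)) x) ∈ M
      apply hAM
      refine ⟨snocAI j t x, ⟨?_, hxF⟩, ?_⟩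
      · intro i _
        rw [snocAI_apply]
        induction i using Fin.lastCases with
        | last => simpa [Fin.snoc_last] using ht
        | cast i => simpa [Fin.snoc_castSucc] using hxC i (Set.mem_univ i)
      · show (WithLp.equiv 2 (Fin (j+1) → ℝ)) (snocAI j t x)
            = me.symm (t, (WithLp.equiv 2 (Fin j → ℝ)) x)
        rw [snocAI_apply]
        simp only [hme, MeasurableEquiv.piFinSuccAbove_symm_apply]
        have hins : (Fin.insertNthEquiv (fun _ : Fin (j+1) => ℝ) (Fin.last j))
            (t, (WithLp.equiv 2 (Fin j → ℝ)) x)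
            = Fin.insertNth (Fin.last j) t ((WithLp.equiv 2 (Fin j → ℝ)) x) := rfl
        rw [hins, Fin.insertNth_last']
        rfl
    have hcube : ENNReal.ofReal (γj * ℓ ^ (j+1)) ≤ ENNReal.ofReal (γj * ℓ ^ j) * volume (Set.Icc (0:ℝ) a) := by
      rw [Real.volume_Icc, sub_zero, show γj * ℓ ^ (j+1) = (γj * ℓ ^ j) * ℓ by ring,
        ENNReal.ofReal_mul (by positivity)]
      exact mul_le_mul_right (ENNReal.ofReal_le_ofReal ha) _
    calc ENNReal.ofReal (γj * ℓ ^ (j+1))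
        ≤ ENNReal.ofReal (γj * ℓ ^ j) * volume (Set.Icc (0:ℝ) a) := hcube
      _ = ∫⁻ _ in Set.Icc (0:ℝ) a, ENNReal.ofReal (γj * ℓ ^ j) := (setLIntegral_const _ _).symm
      _ ≤ ∫⁻ t in Set.Icc (0:ℝ) a, volume (Prod.mk t ⁻¹' S) :=
          setLIntegral_mono (measurable_measure_prodMk_left hSmeas) hslice
      _ ≤ ∫⁻ t, volume (Prod.mk t ⁻¹' S) := setLIntegral_le_lintegral _ _
      _ = volume S := by rw [Measure.volume_eq_prod, Measure.prod_apply hSmeas]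
      _ = volume A := hvolS.trans hMA

theorem gcc_mono_dimension (d k : ℕ) (hk : 1 ≤ k) (hkd : k ≤ d) (ℓ γ : ℝ)
    (hℓ : 0 < ℓ) (hγ : 0 < γ) (E : Set (EuclideanSpace ℝ (Fin d)))
    (hE : SatisfiesGCC d k ℓ γ E) :
    ∀ j : ℕ, k ≤ j → j ≤ d → ∃ γ' > (0 : ℝ), SatisfiesGCC d j ℓ γ' E := by
  intro j hkj hjd
  obtain ⟨γj, hγj, hB⟩ := gcc_cube k hk ℓ γ hℓ hγ j hkj
  refine ⟨γj, hγj, ?_⟩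
  intro ψ a ha
  have h1 : (ψ '' (WithLp.ofLp ⁻¹' Set.univ.pi fun _ : Fin j => Set.Icc (0:ℝ) a)) ∩ E
      = ψ '' ((WithLp.ofLp ⁻¹' Set.univ.pi fun _ : Fin j => Set.Icc (0:ℝ) a) ∩ ψ ⁻¹' E) :=
    (Set.image_inter_preimage _ _ _).symm
  rw [h1, ψ.isometry.hausdorffMeasure_image (Or.inl (by positivity)) _]
  exact le_trans (hB (ψ ⁻¹' E) (gcc_preimage hE ψ) a ha) (vol_le_hausdorff j _)
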